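/- Let ℓ ≥ 3 be an integer and let F be an ℓ-independent k-width-family of Fin m with every G_i satisfying G_i ≠ ∅ and G_i ≠ Fin m. Fix indices i*, j* ∈ [k] and vectors b₃, b₄ ∈ {0,1}^k, matrices C₃, C₄ ∈ {0,1}^{k×k} with b₃(i*) = b₄(i*) = 1, C₃(i*, j*) = 0, C₄(i*, j*) = 1, and set v₃ = v^ℓ_{F[b₃,C₃]} and v₄ = v^ℓ_{F[b₄,C₄]}. Let (f, p_A, p_B, p_C) be a three-bidder auction rule whose valuation class for bidder A contains all single-minded valuations, and let M : Finset (Fin m) → ℝ be nondecreasing with M(∅) = 0 such that M is a menu for bidder A at the profile (v₃, v₃). Write v* for the single-minded valuation with value (√3 − 1)·ℓ on bundles containing (G_{i*})ᶜ and 0 elsewhere. If M((G_{i*})ᶜ) > (√3 − 1)·ℓ, then: (a) the welfare of f on the profile (v*, v₃, v₃) is at most ℓ; and (b) there exist pairwise disjoint bundles (S_A, S_B, S_C) with v*(S_A) + v₃(S_B) + v₄(S_C) ≥ (√3 − 1)·ℓ + 2(ℓ − 1). -/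
import Mathlib


/-- A collection of bundles of `Fin m`, indexed by `ι`, is `ℓ`-sparse if the union of any
`ℓ - 1` (not necessarily distinct) members is not all of `Fin m`. -/
def Sparse (m ℓ : ℕ) {ι : Type*} (S : ι → Finset (Fin m)) : Prop :=
  ∀ g : Fin (ℓ - 1) → ι,
    (Finset.univ.sup fun t => S (g t)) ≠ (Finset.univ : Finset (Fin m))

/-- A `k`-width-family of `Fin m`. -/
structure WidthFamily (m k : ℕ) where
  G : Fin k → Finset (Fin m)
  H : Fin 2 → Fin k → Fin k → Finset (Fin m)
  H0_sub : ∀ i j, H 0 i j ⊆ (G i)ᶜ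
  H1_sub : ∀ i j, H 1 i j ⊆ G i

/-- The collection `F[b, C]` of `k²` bundles. -/
def WidthFamily.coll {m k : ℕ} (F : WidthFamily m k)
    (b : Fin k → Fin 2) (C : Fin k → Fin k → Fin 2) :
    Fin k × Fin k → Finset (Fin m) := fun p =>
  if b p.1 = 0 then
    if C p.1 p.2 = 0 then F.G p.1 ∪ F.H 0 p.1 p.2
    else F.G p.1 ∪ ((F.G p.1)ᶜ \ F.H 0 p.1 p.2)
  else
    if C p.1 p.2 = 0 then (F.G p.1)ᶜ ∪ F.H 1 p.1 p.2
    else (F.G p.1)ᶜ ∪ (F.G p.1 \ F.H 1 p.1 p.2)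

/-- `F` is `ℓ`-independent if `F[b, C]` is `ℓ`-sparse for every `b` and `C`. -/
def WidthFamily.Independent {m k : ℕ} (F : WidthFamily m k) (ℓ : ℕ) : Prop :=
  ∀ (b : Fin k → Fin 2) (C : Fin k → Fin k → Fin 2), Sparse m ℓ (F.coll b C)

/-- The cover number `σ_S(X)`: the least number of members of the collection `S` needed to
cover `X`, if `X` is contained in the union of all members, and `max ℓ d` otherwise (where
`d` is the number of members). -/
noncomputable def coverNum (m ℓ : ℕ) {ι : Type*} [Fintype ι]
    (S : ι → Finset (Fin m)) (X : Finset (Fin m)) : ℕ :=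
  if X ⊆ Finset.univ.sup S then
    sInf {n | ∃ Y : Finset ι, X ⊆ Y.sup S ∧ Y.card = n}
  else max ℓ (Fintype.card ι)

/-- The modified set-cover valuation `v_S^ℓ`. -/
noncomputable def vSl (m ℓ : ℕ) {ι : Type*} [Fintype ι]
    (S : ι → Finset (Fin m)) (X : Finset (Fin m)) : ℝ :=
  if (coverNum m ℓ S X : ℝ) < (ℓ : ℝ) / 2 then (coverNum m ℓ S X : ℝ)
  else if (coverNum m ℓ S Xᶜ : ℝ) < (ℓ : ℝ) / 2 then (ℓ : ℝ) - (coverNum m ℓ S Xᶜ : ℝ)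
  else (ℓ : ℝ) / 2

/-- A valuation is single-minded if there are `w ≥ 0` and a bundle `T` such that it is
`w` on bundles containing `T` and `0` otherwise. -/
def IsSingleMinded {m : ℕ} (v : Finset (Fin m) → ℝ) : Prop :=
  ∃ (w : ℝ) (T : Finset (Fin m)), 0 ≤ w ∧ ∀ S : Finset (Fin m), v S = if T ⊆ S then w else 0


lemma coverNum_le_of_cover {m ℓ : ℕ} {ι : Type*} [Fintype ι]
    {S : ι → Finset (Fin m)} {X : Finset (Fin m)} {Y : Finset ι}
    (h : X ⊆ Y.sup S) : coverNum m ℓ S X ≤ Y.card := by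
  have hc : X ⊆ Finset.univ.sup S := h.trans (Finset.sup_mono (Finset.subset_univ Y))
  rw [coverNum, if_pos hc]
  exact Nat.sInf_le ⟨Y, h, rfl⟩

lemma coverNum_mono {m ℓ : ℕ} {ι : Type*} [Fintype ι]
    {S : ι → Finset (Fin m)} {X Y : Finset (Fin m)} (hXY : X ⊆ Y) :
    coverNum m ℓ S X ≤ coverNum m ℓ S Y := by
  by_cases hY : Y ⊆ Finset.univ.sup S
  · have hne : {n | ∃ Z : Finset ι, Y ⊆ Z.sup S ∧ Z.card = n}.Nonempty :=
      ⟨(Finset.univ : Finset ι).card, Finset.univ, hY, rfl⟩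
    obtain ⟨Z, hZ, hcard⟩ := Nat.sInf_mem hne
    calc coverNum m ℓ S X ≤ Z.card := coverNum_le_of_cover (hXY.trans hZ)
      _ = coverNum m ℓ S Y := by rw [coverNum, if_pos hY]; exact hcard
  · conv_rhs => rw [coverNum, if_neg hY]
    by_cases hX : X ⊆ Finset.univ.sup S
    · calc coverNum m ℓ S X ≤ (Finset.univ : Finset ι).card :=
          coverNum_le_of_cover (by simpa using hX)
        _ = Fintype.card ι := Finset.card_univ
        _ ≤ max ℓ _ := le_max_right _ _
    · rw [coverNum, if_neg hX]

lemma vSl_add_le (m ℓ : ℕ) {ι : Type*} [Fintype ι]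
    (S : ι → Finset (Fin m)) (X Y : Finset (Fin m)) (hd : Disjoint X Y) :
    vSl m ℓ S X + vSl m ℓ S Y ≤ (ℓ : ℝ) := by
  have hXY : X ⊆ Yᶜ := le_compl_iff_disjoint_right.mpr hd
  have hYX : Y ⊆ Xᶜ := le_compl_iff_disjoint_right.mpr hd.symm
  have h1 : (coverNum m ℓ S X : ℝ) ≤ (coverNum m ℓ S Yᶜ : ℝ) := by
    exact_mod_cast coverNum_mono hXY
  have h2 : (coverNum m ℓ S Y : ℝ) ≤ (coverNum m ℓ S Xᶜ : ℝ) := by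
    exact_mod_cast coverNum_mono hYX
  have h3 : (0:ℝ) ≤ (coverNum m ℓ S Xᶜ : ℝ) := by positivity
  have h4 : (0:ℝ) ≤ (coverNum m ℓ S Yᶜ : ℝ) := by positivity
  unfold vSl
  split_ifs <;> linarith

lemma vSl_compl_ge {m ℓ : ℕ} {ι : Type*} [Fintype ι] [DecidableEq ι]
    (hℓ : 3 ≤ ℓ) {S : ι → Finset (Fin m)}
    (hS : ∀ g : Fin (ℓ - 1) → ι,
      (Finset.univ.sup fun t => S (g t)) ≠ (Finset.univ : Finset (Fin m)))
    (p : ι) : (ℓ : ℝ) - 1 ≤ vSl m ℓ S (S p)ᶜ := by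
  have hc1 : coverNum m ℓ S ((S p)ᶜ)ᶜ ≤ 1 := by
    rw [compl_compl]
    have h : S p ⊆ ({p} : Finset ι).sup S := by simp
    simpa using coverNum_le_of_cover h
  have hc2 : ℓ - 1 ≤ coverNum m ℓ S ((S p)ᶜ) := by
    by_contra hcon
    push_neg at hcon
    by_cases hcov : (S p)ᶜ ⊆ Finset.univ.sup S
    · have hne : {n | ∃ Z : Finset ι, (S p)ᶜ ⊆ Z.sup S ∧ Z.card = n}.Nonempty :=
        ⟨(Finset.univ : Finset ι).card, Finset.univ, hcov, rfl⟩
      obtain ⟨Z, hZ, hcard⟩ := Nat.sInf_mem hne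
      have hZcard : Z.card ≤ ℓ - 2 := by
        rw [coverNum, if_pos hcov] at hcon; omega
      set W : Finset ι := insert p Z with hW
      have hWcard : W.card ≤ ℓ - 1 := by
        have h := Finset.card_insert_le p Z
        rw [← hW] at h
        omega
      set g : Fin (ℓ - 1) → ι := fun t =>
        if h : (t : ℕ) < W.card then (W.equivFin.symm ⟨(t : ℕ), h⟩ : ι) else p with hg
      apply hS g
      apply Finset.eq_univ_of_forall
      intro x
      rw [Finset.mem_sup]
      have hx : x ∈ W.sup S := by
        rcases Finset.mem_union.mp (by
          rw [Finset.union_compl]; exact Finset.mem_univ x :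
            x ∈ S p ∪ (S p)ᶜ) with h | h
        · exact Finset.le_sup (f := S) (Finset.mem_insert_self p Z) h
        · exact Finset.mem_of_subset (Finset.sup_mono (Finset.subset_insert p Z)) (hZ h)
      rw [Finset.mem_sup] at hx
      obtain ⟨q, hqW, hxq⟩ := hx
      set t0 : Fin W.card := W.equivFin ⟨q, hqW⟩ with ht0
      have ht0lt : (t0 : ℕ) < ℓ - 1 := lt_of_lt_of_le t0.2 hWcard
      refine ⟨⟨(t0 : ℕ), ht0lt⟩, Finset.mem_univ _, ?_⟩
      have hgq : g ⟨(t0 : ℕ), ht0lt⟩ = q := by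
        rw [hg]
        simp only
        rw [dif_pos t0.2]
        have heq : (⟨(t0 : ℕ), t0.2⟩ : Fin W.card) = t0 := rfl
        rw [heq, ht0, Equiv.symm_apply_apply]
      rw [hgq]; exact hxq
    · rw [coverNum, if_neg hcov] at hcon
      omega
  have hc1' : (coverNum m ℓ S ((S p)ᶜ)ᶜ : ℝ) ≤ 1 := by exact_mod_cast hc1
  have hc2' : (ℓ : ℝ) - 1 ≤ (coverNum m ℓ S ((S p)ᶜ) : ℝ) := by
    have h0 : ((ℓ - 1 : ℕ) : ℝ) ≤ (coverNum m ℓ S ((S p)ᶜ) : ℝ) := by exact_mod_cast hc2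
    have h1 : ((ℓ - 1 : ℕ) : ℝ) = (ℓ : ℝ) - 1 := by
      have h2 : 1 ≤ ℓ := by omega
      push_cast [h2]; ring
    linarith
  have hℓr : (3 : ℝ) ≤ (ℓ : ℝ) := by exact_mod_cast hℓ
  rw [vSl, if_neg (by push_neg; linarith), if_pos (by linarith)]
  linarith

/-- An expensive menu price on `(G_{i*})ᶜ` forces low welfare against the pair `(v₃, v₃)`
while high welfare is available on the profile `(v*, v₃, v₄)`. -/
theorem high_price_implies_bad_welfare
    (m k ℓ : ℕ) (hm : 0 < m) (hℓ : 3 ≤ ℓ)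
    (F : WidthFamily m k) (hF : F.Independent ℓ)
    (hG : ∀ i : Fin k, F.G i ≠ ∅ ∧ F.G i ≠ (Finset.univ : Finset (Fin m)))
    (istar jstar : Fin k)
    (b₃ b₄ : Fin k → Fin 2) (C₃ C₄ : Fin k → Fin k → Fin 2)
    (hb₃ : b₃ istar = 1) (hb₄ : b₄ istar = 1)
    (hC₃ : C₃ istar jstar = 0) (hC₄ : C₄ istar jstar = 1)
    (v₃ v₄ : Finset (Fin m) → ℝ)
    (hv₃ : v₃ = vSl m ℓ (F.coll b₃ C₃)) (hv₄ : v₄ = vSl m ℓ (F.coll b₄ C₄))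
    (VA : Set (Finset (Fin m) → ℝ)) (hVA : ∀ v : Finset (Fin m) → ℝ, IsSingleMinded v → v ∈ VA)
    (f : (Finset (Fin m) → ℝ) → (Finset (Fin m) → ℝ) → (Finset (Fin m) → ℝ) →
      Finset (Fin m) × Finset (Fin m) × Finset (Fin m))
    (pA pB pC : (Finset (Fin m) → ℝ) → (Finset (Fin m) → ℝ) → (Finset (Fin m) → ℝ) → ℝ)
    (hdisj : ∀ vA vB vC : Finset (Fin m) → ℝ,
      Disjoint (f vA vB vC).1 (f vA vB vC).2.1 ∧
      Disjoint (f vA vB vC).1 (f vA vB vC).2.2 ∧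
      Disjoint (f vA vB vC).2.1 (f vA vB vC).2.2)
    (M : Finset (Fin m) → ℝ)
    (hMmono : ∀ S T : Finset (Fin m), S ⊆ T → M S ≤ M T) (hM0 : M ∅ = 0)
    (hmenu : ∀ vA ∈ VA, pA vA v₃ v₃ = M (f vA v₃ v₃).1 ∧
      ∀ X : Finset (Fin m), vA (f vA v₃ v₃).1 - M (f vA v₃ v₃).1 ≥ vA X - M X)
    (vstar : Finset (Fin m) → ℝ)
    (hvstar : ∀ S : Finset (Fin m),
      vstar S = if (F.G istar)ᶜ ⊆ S then (Real.sqrt 3 - 1) * ℓ else 0)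
    (hprice : (Real.sqrt 3 - 1) * ℓ < M ((F.G istar)ᶜ)) :
    (vstar (f vstar v₃ v₃).1 + v₃ (f vstar v₃ v₃).2.1 + v₃ (f vstar v₃ v₃).2.2 ≤ (ℓ : ℝ)) ∧
    (∃ SA SB SC : Finset (Fin m),
      Disjoint SA SB ∧ Disjoint SA SC ∧ Disjoint SB SC ∧
      (Real.sqrt 3 - 1) * ℓ + 2 * ((ℓ : ℝ) - 1) ≤ vstar SA + v₃ SB + v₄ SC) := by
  subst hv₃ hv₄
  have hℓr : (3 : ℝ) ≤ (ℓ : ℝ) := by exact_mod_cast hℓ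
  have hsq : (1 : ℝ) ≤ Real.sqrt 3 := by
    rw [show (1:ℝ) = Real.sqrt 1 by rw [Real.sqrt_one]]
    exact Real.sqrt_le_sqrt (by norm_num)
  have hw : 0 ≤ (Real.sqrt 3 - 1) * ℓ := mul_nonneg (by linarith) (by positivity)
  have hGcne : (F.G istar)ᶜ ≠ ∅ := by
    intro h
    exact (hG istar).2 (by rwa [Finset.compl_eq_empty_iff] at h)
  have hsm : IsSingleMinded vstar := ⟨_, _, hw, hvstar⟩
  obtain ⟨hpay, hIC⟩ := hmenu vstar (hVA _ hsm)
  have hvempty : vstar ∅ = 0 := by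
    rw [hvstar, if_neg]
    intro h
    exact hGcne (Finset.subset_empty.mp h)
  have h0 := hIC ∅
  rw [hvempty, hM0] at h0
  set v3 := vSl m ℓ (F.coll b₃ C₃) with hv3
  set v4 := vSl m ℓ (F.coll b₄ C₄) with hv4
  have hf1 : vstar (f vstar v3 v3).1 = 0 := by
    rw [hvstar]
    split_ifs with h
    · exfalso
      have hM1 := hMmono _ _ h
      have hv1 : vstar (f vstar v3 v3).1 = (Real.sqrt 3 - 1) * ℓ := by
        rw [hvstar, if_pos h]
      rw [hv1] at h0
      linarith
    · rfl
  constructor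
  · have hkey := vSl_add_le m ℓ (F.coll b₃ C₃) _ _ (hdisj vstar v3 v3).2.2
    rw [hf1]
    rw [hv3]
    linarith
  · refine ⟨(F.G istar)ᶜ, F.G istar \ F.H 1 istar jstar, F.H 1 istar jstar,
      disjoint_compl_left.mono_right Finset.sdiff_subset,
      disjoint_compl_left.mono_right (F.H1_sub istar jstar),
      Finset.sdiff_disjoint, ?_⟩
    have hA : vstar (F.G istar)ᶜ = (Real.sqrt 3 - 1) * ℓ := by
      rw [hvstar, if_pos (subset_refl _)]
    have hB : (ℓ:ℝ) - 1 ≤ v3 (F.G istar \ F.H 1 istar jstar) := by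
      have hm3 : F.coll b₃ C₃ (istar, jstar) = (F.G istar)ᶜ ∪ F.H 1 istar jstar := by
        simp [WidthFamily.coll, hb₃, hC₃]
      have hcompl : (F.coll b₃ C₃ (istar, jstar))ᶜ = F.G istar \ F.H 1 istar jstar := by
        rw [hm3, Finset.compl_union, compl_compl]
        ext x
        simp [Finset.mem_sdiff]
      rw [hv3, ← hcompl]
      exact vSl_compl_ge hℓ (hF b₃ C₃) (istar, jstar)
    have hC : (ℓ:ℝ) - 1 ≤ v4 (F.H 1 istar jstar) := by
      have hm4 : F.coll b₄ C₄ (istar, jstar)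
          = (F.G istar)ᶜ ∪ (F.G istar \ F.H 1 istar jstar) := by
        simp [WidthFamily.coll, hb₄, hC₄]
      have hcompl : (F.coll b₄ C₄ (istar, jstar))ᶜ = F.H 1 istar jstar := by
        rw [hm4]
        ext x
        simp only [Finset.mem_compl, Finset.mem_union, Finset.mem_sdiff, not_or, not_and,
          not_not]
        constructor
        · rintro ⟨hg, himp⟩
          exact himp hg
        · intro hx
          exact ⟨F.H1_sub istar jstar hx, fun _ => hx⟩
      rw [hv4, ← hcompl]
      exact vSl_compl_ge hℓ (hF b₄ C₄) (istar, jstar)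
    rw [hA]
    linarith
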